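/- Let f : H → ℝ be a differentiable convex function on a real Hilbert space with minimizer x*, and let (X(t), Z(t)) solve the ODE system Z = b_t Ẋ + c_t ∇f(X) + X, Ż = -a_t ∇f(X) with positive coefficient functions a_t, b_t, c_t. If A_t := a_t b_t satisfies 0 ≤ Ȧ_t ≤ a_t, then the Lyapunov function E(t) = A_t (f(X(t)) − f(x*)) + (1/2)‖Z(t) − x*‖² is non-increasing in t. -/

import Mathlib

open Set Filter Topology

open scoped RealInnerProductSpace

/-- Gradient inequality for convex functions: `f x + ⟪g x, y - x⟫ ≤ f y`. -/
lemma sppa_grad_ineq {H : Type*} [NormedAddCommGroup H] [InnerProductSpace ℝ H]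
    [CompleteSpace H]
    (f : H → ℝ) (g : H → H)
    (hconv : ConvexOn ℝ Set.univ f)
    (hgrad : ∀ x, HasGradientAt f (g x) x) (x y : H) :
    f x + ⟪g x, y - x⟫ ≤ f y := by
  set φ : ℝ → ℝ := fun s => f (x + s • (y - x)) with hφ
  have hφconv : ConvexOn ℝ Set.univ φ := by
    have := hconv.comp_affineMap (AffineMap.lineMap x y : ℝ →ᵃ[ℝ] H)
    have heq : (f ∘ (AffineMap.lineMap x y : ℝ →ᵃ[ℝ] H)) = φ := by
      funext s
      simp [φ, AffineMap.lineMap_apply, add_comm]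
    rw [heq] at this
    simpa using this
  have hcurve : HasDerivAt (fun s : ℝ => x + s • (y - x)) (y - x) 0 := by
    simpa using ((hasDerivAt_id (0:ℝ)).smul_const (y - x)).const_add x
  have hφd : HasDerivAt φ ⟪g x, y - x⟫ 0 := by
    have hf : HasFDerivAt f ((InnerProductSpace.toDual ℝ H) (g x)) x :=
      (hgrad x).hasFDerivAt
    have hf' : HasFDerivAt f ((InnerProductSpace.toDual ℝ H) (g x)) (x + (0:ℝ) • (y - x)) := by
      simpa using hf
    have := hf'.comp_hasDerivAt 0 hcurve
    simp only [InnerProductSpace.toDual_apply_apply] at this; exact this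
  have hslope : ⟪g x, y - x⟫ ≤ slope φ 0 1 :=
    hφconv.le_slope_of_hasDerivWithinAt (mem_univ 0) (mem_univ 1) one_pos
      (hφd.hasDerivWithinAt)
  have : slope φ 0 1 = f y - f x := by
    simp [slope_def_field, φ]
  rw [this] at hslope
  linarith

/-- Continuous-time Lyapunov function
`E(t) = A_t (f(X t) - f x*) + (1/2)‖Z t - x*‖²` with `A_t = a_t b_t`
is non-increasing on `[0, ∞)` along the ODE system
`Z = b_t Ẋ + c_t ∇f(X) + X`, `Ż = -a_t ∇f(X)`, provided `0 ≤ Ȧ_t ≤ a_t`. -/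
theorem sppa_stmt0
    {H : Type*} [NormedAddCommGroup H] [InnerProductSpace ℝ H] [CompleteSpace H]
    (f : H → ℝ) (g : H → H)
    (hconv : ConvexOn ℝ Set.univ f)
    (hgrad : ∀ x, HasGradientAt f (g x) x)
    (xs : H) (hmin : ∀ y, f xs ≤ f y)
    (a b c : ℝ → ℝ)
    (hapos : ∀ t > (0:ℝ), 0 < a t) (hbpos : ∀ t > (0:ℝ), 0 < b t)
    (hcpos : ∀ t > (0:ℝ), 0 < c t)
    (ha0 : 0 ≤ a 0) (hb0 : 0 ≤ b 0) (hc0 : 0 ≤ c 0)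
    (x0 : H) (X Z X' : ℝ → H)
    (hX0 : X 0 = x0) (hZ0 : Z 0 = x0)
    (hX : ∀ t ∈ Set.Ici (0:ℝ), HasDerivAt X (X' t) t)
    (hZeq : ∀ t ∈ Set.Ici (0:ℝ), Z t = b t • X' t + c t • g (X t) + X t)
    (hZ' : ∀ t ∈ Set.Ici (0:ℝ), HasDerivAt Z (-(a t) • g (X t)) t)
    (A' : ℝ → ℝ)
    (hA : ∀ t ∈ Set.Ici (0:ℝ), HasDerivAt (fun s => a s * b s) (A' t) t)
    (hA'nonneg : ∀ t ∈ Set.Ici (0:ℝ), 0 ≤ A' t)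
    (hA'le : ∀ t ∈ Set.Ici (0:ℝ), A' t ≤ a t) :
    AntitoneOn
      (fun t => a t * b t * (f (X t) - f xs) + (1/2) * ‖Z t - xs‖^2)
      (Set.Ici (0:ℝ)) := by
  set E : ℝ → ℝ :=
    fun t => a t * b t * (f (X t) - f xs) + (1/2) * ‖Z t - xs‖^2 with hE
  set E' : ℝ → ℝ := fun t =>
    A' t * (f (X t) - f xs) + (a t * b t) * ⟪g (X t), X' t⟫
      + ⟪Z t - xs, -(a t) • g (X t)⟫ with hE'
  have hEderiv : ∀ t ∈ Set.Ici (0:ℝ), HasDerivAt E (E' t) t := by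
    intro t ht
    have hfX : HasDerivAt (fun s => f (X s)) ⟪g (X t), X' t⟫ t := by
      have hf : HasFDerivAt f ((InnerProductSpace.toDual ℝ H) (g (X t))) (X t) :=
        (hgrad (X t)).hasFDerivAt
      have := hf.comp_hasDerivAt t (hX t ht)
      simp only [InnerProductSpace.toDual_apply_apply] at this; exact this
    have h1 : HasDerivAt (fun s => a s * b s * (f (X s) - f xs))
        (A' t * (f (X t) - f xs) + (a t * b t) * ⟪g (X t), X' t⟫) t := by
      have := (hA t ht).mul (hfX.sub_const (f xs))
      exact this
    have hZsub : HasDerivAt (fun s => Z s - xs) (-(a t) • g (X t)) t :=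
      (hZ' t ht).sub_const xs
    have h2 : HasDerivAt (fun s => (1/2 : ℝ) * ‖Z s - xs‖^2)
        ⟪Z t - xs, -(a t) • g (X t)⟫ t := by
      have hin := (hZsub.inner ℝ hZsub)
      have : HasDerivAt (fun s => ⟪Z s - xs, Z s - xs⟫)
          (⟪Z t - xs, -(a t) • g (X t)⟫ + ⟪-(a t) • g (X t), Z t - xs⟫) t := hin
      have heq : (fun s => (1/2 : ℝ) * ‖Z s - xs‖^2)
          = fun s => (1/2 : ℝ) * ⟪Z s - xs, Z s - xs⟫ := by
        funext s; rw [real_inner_self_eq_norm_sq]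
      rw [heq]
      have := this.const_mul (1/2 : ℝ)
      refine this.congr_deriv ?_
      rw [real_inner_comm (Z t - xs)]
      ring
    exact (h1.add h2).congr_deriv (by simp only [E'])
  have hcont : ContinuousOn E (Set.Ici 0) := fun t ht =>
    (hEderiv t ht).continuousAt.continuousWithinAt
  have hint : interior (Set.Ici (0:ℝ)) = Set.Ioi 0 := interior_Ici
  apply antitoneOn_of_deriv_nonpos (convex_Ici 0) hcont
  · rw [hint]
    intro t ht
    exact (hEderiv t (Set.mem_Ici.mpr (le_of_lt ht))).differentiableAt.differentiableWithinAt
  · rw [hint]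
    intro t ht
    have ht' : t ∈ Set.Ici (0:ℝ) := Set.mem_Ici.mpr (le_of_lt ht)
    rw [(hEderiv t ht').deriv]
    -- compute E' and show ≤ 0
    have hz : Z t - xs = b t • X' t + c t • g (X t) + (X t - xs) := by
      rw [hZeq t ht']; abel
    have hexp : ⟪Z t - xs, -(a t) • g (X t)⟫
        = -(a t) * (b t * ⟪g (X t), X' t⟫ + c t * ⟪g (X t), g (X t)⟫
            + ⟪g (X t), X t - xs⟫) := by
      rw [hz]
      simp only [inner_add_left, inner_smul_left, inner_smul_right, conj_trivial]
      rw [real_inner_comm (X' t) (g (X t)), real_inner_comm (X t - xs) (g (X t))]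
      try ring
    have hconvineq : f (X t) - f xs ≤ ⟪g (X t), X t - xs⟫ := by
      have := sppa_grad_ineq f g hconv hgrad (X t) xs
      have hsym : ⟪g (X t), xs - X t⟫ = -⟪g (X t), X t - xs⟫ := by
        rw [← inner_neg_right]; congr 1; abel
      rw [hsym] at this
      linarith
    have hfnn : 0 ≤ f (X t) - f xs := sub_nonneg.mpr (hmin (X t))
    have hgg : 0 ≤ ⟪g (X t), g (X t)⟫ := real_inner_self_nonneg
    have h1 := hA'le t ht'
    have h2 := hapos t ht
    have h3 := hcpos t ht
    simp only [hE', hexp]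
    nlinarith [mul_nonneg h2.le (mul_nonneg h3.le hgg),
      mul_nonneg (sub_nonneg.mpr h1) hfnn,
      mul_le_mul_of_nonneg_left hconvineq h2.le]
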